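/- Let 0 < s < 1/2 and s < α < s/2 + 1/4. Define I^{(0)} = (−1,0) and, for k ≥ 1, let I^{(k)} be the right dyadic child of I^{(k−1)}. Then the function f = Σ_{k≥0} |I^{(k)}|^α h_{I^{(k)}} belongs to H^s_𝒟(ℝ) but f² does not belong to H^s_𝒟(ℝ). In particular, H^s_𝒟(ℝ) is not an algebra for 0 < s < 1/2. -/

import Mathlib

open MeasureTheory Filter
open scoped ENNReal Classical Topology

noncomputable section

/-- The standard dyadic interval `[k·2^n, (k+1)·2^n)`. -/
def dyadic (n k : ℤ) : Set ℝ := Set.Ico ((k : ℝ) * 2 ^ n) (((k : ℝ) + 1) * 2 ^ n)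

/-- The Haar function associated with `dyadic n k`:
`h_I = |I|^{-1/2} (1_{I_+} - 1_{I_-})`. -/
def haar (n k : ℤ) : ℝ → ℝ := fun x =>
  (2 : ℝ) ^ (-(n : ℝ) / 2) *
    ((dyadic (n - 1) (2 * k + 1)).indicator 1 x - (dyadic (n - 1) (2 * k)).indicator 1 x)

/-- The constant value of `haar n k` on the dyadic subinterval `dyadic m j`
(its value at the left endpoint of that subinterval). -/
def haarVal (n k m j : ℤ) : ℝ := haar n k ((j : ℝ) * 2 ^ m)

/-- Haar coefficient `(f, h_I)`. -/
def innH (f : ℝ → ℝ) (n k : ℤ) : ℝ := ∫ x, f x * haar n k x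

/-- Dyadic average `⟨f⟩_I = |I|⁻¹ ∫_I f`. -/
def avg (f : ℝ → ℝ) (n k : ℤ) : ℝ := (2 : ℝ) ^ (-n) * ∫ x in dyadic n k, f x

/-- The linear span of the Haar functions. -/
def haarSpan : Submodule ℝ (ℝ → ℝ) :=
  Submodule.span ℝ (Set.range fun p : ℤ × ℤ => haar p.1 p.2)

end

/-- Membership in the dyadic fractional Sobolev space H^s. -/
def memHs (s : ℝ) (f : ℝ → ℝ) : Prop :=
  MemLp f 2 volume ∧
    Summable fun p : ℤ × ℤ => (2 : ℝ) ^ (-2 * s * (p.1 : ℝ)) * innH f p.1 p.2 ^ 2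

/-- The counterexample in the low-regularity range: I^(k) = dyadic (-k) (-1) = [-2^{-k}, 0). -/
noncomputable def fLow (α : ℝ) : ℝ → ℝ := fun x =>
  ∑' k : ℕ, (2 : ℝ) ^ (-(k : ℝ) * α) * haar (-(k : ℤ)) (-1) x

namespace NA

lemma zpow_pos' (n : ℤ) : (0:ℝ) < 2 ^ n := zpow_pos (by norm_num) n

lemma measurableSet_dyadic (n k : ℤ) : MeasurableSet (dyadic n k) := measurableSet_Ico

lemma volume_dyadic (n k : ℤ) : MeasureTheory.volume (dyadic n k) = ENNReal.ofReal ((2:ℝ) ^ n) := by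
  rw [dyadic, Real.volume_Ico]
  congr 1; ring

lemma mem_dyadic_elim {n k l : ℤ} {x : ℝ} (h1 : x ∈ dyadic n k) (h2 : x ∈ dyadic n l) : k = l := by
  simp only [dyadic, Set.mem_Ico] at h1 h2
  have hp := zpow_pos' n
  have e1 : (k:ℝ) < (l:ℝ) + 1 := by nlinarith [h1.1, h2.2]
  have e2 : (l:ℝ) < (k:ℝ) + 1 := by nlinarith [h2.1, h1.2]
  have : k < l + 1 := by exact_mod_cast e1
  have : l < k + 1 := by exact_mod_cast e2
  omega

lemma dyadic_disjoint {n k l : ℤ} (h : k ≠ l) : Disjoint (dyadic n k) (dyadic n l) := by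
  rw [Set.disjoint_left]
  intro x h1 h2
  exact h (mem_dyadic_elim h1 h2)

lemma dyadic_childL (n k : ℤ) : dyadic (n-1) (2*k) ⊆ dyadic n k := by
  intro x hx
  simp only [dyadic, Set.mem_Ico] at *
  have h := zpow_pos' (n-1)
  have e : (2:ℝ) ^ n = 2 * 2 ^ (n-1) := by
    rw [show n = 1 + (n-1) by ring, zpow_add₀ (by norm_num : (2:ℝ) ≠ 0)]
    ring_nf
  push_cast at hx ⊢
  rw [e]
  constructor <;> nlinarith [hx.1, hx.2]

lemma dyadic_childR (n k : ℤ) : dyadic (n-1) (2*k+1) ⊆ dyadic n k := by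
  intro x hx
  simp only [dyadic, Set.mem_Ico] at *
  have h := zpow_pos' (n-1)
  have e : (2:ℝ) ^ n = 2 * 2 ^ (n-1) := by
    rw [show n = 1 + (n-1) by ring, zpow_add₀ (by norm_num : (2:ℝ) ≠ 0)]
    ring_nf
  push_cast at hx ⊢
  rw [e]
  constructor <;> nlinarith [hx.1, hx.2]

/-- Any dyadic interval is contained in some dyadic interval of any coarser level. -/
lemma dyadic_subset_exists {n m : ℤ} (h : n ≤ m) (k : ℤ) : ∃ q, dyadic n k ⊆ dyadic m q := by
  set d : ℕ := (m - n).toNat with hd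
  have hmn : m = n + d := by simp [hd]; omega
  refine ⟨k / (2^d : ℤ), ?_⟩
  have hdiv : (2^d : ℤ) * (k / 2^d) + k % 2^d = k := Int.mul_ediv_add_emod k (2^d)
  have hr0 : (0:ℤ) ≤ k % 2^d := Int.emod_nonneg k (by positivity)
  have hr1 : k % 2^d < 2^d := Int.emod_lt_of_pos k (by positivity)
  set q : ℤ := k / 2^d
  set r : ℤ := k % 2^d
  intro x hx
  simp only [dyadic, Set.mem_Ico] at *
  have hp := zpow_pos' n
  have e2 : (2:ℝ) ^ m = 2^(d:ℕ) * 2 ^ n := by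
    rw [hmn, zpow_add₀ (by norm_num : (2:ℝ) ≠ 0)]
    norm_num [zpow_natCast]
    ring
  have hk : (k:ℝ) = (2:ℝ)^(d:ℕ) * (q:ℝ) + (r:ℝ) := by exact_mod_cast congrArg (Int.cast : ℤ → ℝ) hdiv.symm
  have hrR0 : (0:ℝ) ≤ (r:ℝ) := by exact_mod_cast hr0
  have hrR1 : (r:ℝ) + 1 ≤ (2:ℝ)^(d:ℕ) := by
    have : r + 1 ≤ (2^d : ℤ) := hr1
    exact_mod_cast this
  constructor
  · calc (q:ℝ) * 2^m = (2:ℝ)^(d:ℕ) * q * 2^n := by rw [e2]; ring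
    _ ≤ k * 2^n := by nlinarith
    _ ≤ x := hx.1
  · calc x < ((k:ℝ)+1) * 2^n := hx.2
    _ ≤ ((q:ℝ)+1) * 2^m := by rw [e2, hk]; nlinarith
  
end NA
namespace NA

lemma haar_measurable (n k : ℤ) : Measurable (haar n k) := by
  unfold haar
  exact (measurable_const.mul (((measurable_const.indicator (measurableSet_dyadic _ _))).sub
    ((measurable_const.indicator (measurableSet_dyadic _ _)))))

lemma haar_support {n k : ℤ} {x : ℝ} (h : haar n k x ≠ 0) : x ∈ dyadic n k := by
  unfold haar at h
  by_contra hx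
  apply h
  have h1 : x ∉ dyadic (n-1) (2*k+1) := fun hc => hx (dyadic_childR n k hc)
  have h2 : x ∉ dyadic (n-1) (2*k) := fun hc => hx (dyadic_childL n k hc)
  rw [Set.indicator_of_notMem h1, Set.indicator_of_notMem h2]
  ring

/-- `haar n k` is constant on dyadic intervals of level `n - 1`. -/
lemma haar_const {n k q : ℤ} {x y : ℝ} (hx : x ∈ dyadic (n-1) q) (hy : y ∈ dyadic (n-1) q) :
    haar n k x = haar n k y := by
  unfold haar
  have key : ∀ j : ℤ, (dyadic (n-1) j).indicator (1 : ℝ → ℝ) x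
      = (dyadic (n-1) j).indicator 1 y := by
    intro j
    by_cases hq : j = q
    · subst hq; rw [Set.indicator_of_mem hx, Set.indicator_of_mem hy]; rfl
    · have hx' : x ∉ dyadic (n-1) j := fun hc => hq (mem_dyadic_elim hc hx)
      have hy' : y ∉ dyadic (n-1) j := fun hc => hq (mem_dyadic_elim hc hy)
      rw [Set.indicator_of_notMem hx', Set.indicator_of_notMem hy']
  rw [key, key]

lemma integrable_indicator_dyadic (n k : ℤ) :
    Integrable ((dyadic n k).indicator (1 : ℝ → ℝ)) volume := by
  rw [integrable_indicator_iff (measurableSet_dyadic n k)]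
  exact integrableOn_const (by rw [volume_dyadic]; exact ENNReal.ofReal_ne_top)

lemma haar_integrable (n k : ℤ) : Integrable (haar n k) volume := by
  unfold haar
  exact (((integrable_indicator_dyadic _ _).sub (integrable_indicator_dyadic _ _)).const_mul _)

lemma integral_indicator_dyadic (n k : ℤ) :
    ∫ x, (dyadic n k).indicator (1 : ℝ → ℝ) x = (2:ℝ) ^ n := by
  rw [MeasureTheory.integral_indicator_one (measurableSet_dyadic n k), measureReal_def, volume_dyadic,
    ENNReal.toReal_ofReal (le_of_lt (zpow_pos' n))]

lemma integral_haar (n k : ℤ) : ∫ x, haar n k x = 0 := by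
  unfold haar
  rw [MeasureTheory.integral_const_mul, integral_sub (integrable_indicator_dyadic _ _)
    (integrable_indicator_dyadic _ _), integral_indicator_dyadic, integral_indicator_dyadic]
  ring

/-- If `g` agrees with constant `c` on `dyadic n k`, then `∫ g·h = 0`. -/
lemma integral_mul_haar_eq_zero {g : ℝ → ℝ} {n k : ℤ} {c : ℝ}
    (hg : ∀ x ∈ dyadic n k, g x = c) : ∫ x, g x * haar n k x = 0 := by
  have : ∀ x, g x * haar n k x = c * haar n k x := by
    intro x
    by_cases h : haar n k x = 0
    · rw [h]; ring
    · rw [hg x (haar_support h)]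
  simp_rw [this]
  rw [MeasureTheory.integral_const_mul, integral_haar]; ring

lemma rpow_half_sq (n : ℤ) : (2:ℝ) ^ (-(n:ℝ)/2) * (2:ℝ) ^ (-(n:ℝ)/2) = (2:ℝ) ^ (-n) := by
  rw [← Real.rpow_add (by norm_num : (0:ℝ) < 2)]
  rw [show -(n:ℝ)/2 + -(n:ℝ)/2 = ((-n : ℤ) : ℝ) by push_cast; ring, Real.rpow_intCast]

lemma integral_haar_sq (n k : ℤ) : ∫ x, haar n k x * haar n k x = 1 := by
  have key : ∀ x, haar n k x * haar n k x =
      (2:ℝ) ^ (-n) * ((dyadic (n-1) (2*k+1)).indicator 1 x + (dyadic (n-1) (2*k)).indicator 1 x) := by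
    intro x
    unfold haar
    rw [show ∀ a b : ℝ, (a * b) * (a * b) = (a*a) * (b*b) from fun a b => by ring, rpow_half_sq]
    congr 1
    by_cases h1 : x ∈ dyadic (n-1) (2*k+1)
    · have h2 : x ∉ dyadic (n-1) (2*k) := by
        intro hc
        have := mem_dyadic_elim h1 hc; omega
      rw [Set.indicator_of_mem h1, Set.indicator_of_notMem h2]
      simp
    · by_cases h2 : x ∈ dyadic (n-1) (2*k)
      · rw [Set.indicator_of_notMem h1, Set.indicator_of_mem h2]
        simp
      · rw [Set.indicator_of_notMem h1, Set.indicator_of_notMem h2]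
        simp
  simp_rw [key]
  rw [MeasureTheory.integral_const_mul, integral_add (integrable_indicator_dyadic _ _)
    (integrable_indicator_dyadic _ _), integral_indicator_dyadic, integral_indicator_dyadic]
  rw [← Real.rpow_intCast 2 (-n), ← Real.rpow_intCast 2 (n-1)]
  push_cast
  have e : (2:ℝ)^(-(n:ℝ)) * 2^((n:ℝ)-1) = 2^(-(1:ℝ)) := by
    rw [← Real.rpow_add (by norm_num : (0:ℝ) < 2), show -(n:ℝ) + ((n:ℝ)-1) = -(1:ℝ) by ring]
  have e2 : (2:ℝ)^(-(1:ℝ)) = (2:ℝ)⁻¹ := by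
    rw [Real.rpow_neg (by norm_num), Real.rpow_one]
  rw [mul_add, e, e2]
  norm_num

end NA
namespace NA

lemma left_endpoint_mem (n q : ℤ) : (q:ℝ) * 2 ^ n ∈ dyadic n q := by
  exact ⟨le_refl _, by nlinarith [zpow_pos' n]⟩

lemma ortho_of_lt {n k m l : ℤ} (h : n < m) : ∫ x, haar n k x * haar m l x = 0 := by
  obtain ⟨q, hq⟩ := dyadic_subset_exists (by omega : n ≤ m - 1) k
  have hz : (q:ℝ) * 2 ^ (m-1) ∈ dyadic (m-1) q := left_endpoint_mem _ _
  have hg : ∀ x ∈ dyadic n k, haar m l x = haar m l ((q:ℝ) * 2 ^ (m-1)) :=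
    fun x hx => haar_const (hq hx) hz
  have := integral_mul_haar_eq_zero hg
  rw [← this]
  congr 1; funext x; ring

lemma integral_haar_mul_haar (n k m l : ℤ) :
    ∫ x, haar n k x * haar m l x = if (n, k) = (m, l) then 1 else 0 := by
  by_cases h : (n, k) = (m, l)
  · rw [if_pos h]
    obtain ⟨h1, h2⟩ := Prod.mk.injEq .. ▸ h
    subst h1; subst h2
    exact integral_haar_sq n k
  · rw [if_neg h]
    rcases lt_trichotomy n m with hc | hc | hc
    · exact ortho_of_lt hc
    · subst hc
      have hkl : k ≠ l := fun hc' => h (by rw [hc'])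
      have : ∀ x, haar n k x * haar n l x = 0 := by
        intro x
        by_cases h1 : haar n k x = 0
        · rw [h1]; ring
        · by_cases h2 : haar n l x = 0
          · rw [h2]; ring
          · exact absurd (mem_dyadic_elim (haar_support h1) (haar_support h2)) hkl
      simp_rw [this]
      exact integral_zero _ _
    · rw [← ortho_of_lt hc (k := l) (l := k)]
      congr 1; funext x; ring

end NA
namespace NA

lemma two_zpow_mono {a b : ℤ} (h : a ≤ b) : (2:ℝ)^a ≤ 2^b :=
  zpow_le_zpow_right₀ (by norm_num) h

/-- The interval J_j = [-2^{-j}, -2^{-j-1}), left child of I^(j). -/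
def Jk (j : ℕ) : Set ℝ := dyadic (-(j:ℤ)-1) (-2)

lemma two_zpow_succ (m : ℤ) : (2:ℝ) ^ m = 2 * 2 ^ (m-1) := by
  rw [show m = 1 + (m-1) by ring, zpow_add₀ (by norm_num : (2:ℝ) ≠ 0)]
  ring_nf

lemma mem_Jk_iff {j : ℕ} {x : ℝ} :
    x ∈ Jk j ↔ -(2:ℝ)^(-(j:ℤ)) ≤ x ∧ x < -(2:ℝ)^(-(j:ℤ)-1) := by
  unfold Jk dyadic
  rw [Set.mem_Ico]
  have e := two_zpow_succ (-(j:ℤ))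
  push_cast
  constructor
  · rintro ⟨h1, h2⟩
    constructor <;> nlinarith
  · rintro ⟨h1, h2⟩
    constructor <;> nlinarith

lemma mem_Jk_elim {i j : ℕ} {x : ℝ} (h1 : x ∈ Jk i) (h2 : x ∈ Jk j) : i = j := by
  rw [mem_Jk_iff] at h1 h2
  by_contra hne
  rcases Nat.lt_or_ge i j with hc | hc
  · have : (2:ℝ)^(-(j:ℤ)) ≤ 2^(-(i:ℤ)-1) := two_zpow_mono (by omega)
    linarith [h1.2, h2.1]
  · have hc' : j < i := by omega
    have : (2:ℝ)^(-(i:ℤ)) ≤ 2^(-(j:ℤ)-1) := two_zpow_mono (by omega)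
    linarith [h2.2, h1.1]

lemma Jk_subset {j : ℕ} : Jk j ⊆ Set.Ico (-1:ℝ) 0 := by
  intro x hx
  rw [mem_Jk_iff] at hx
  have h1 : (2:ℝ)^(-(j:ℤ)) ≤ 2^(0:ℤ) := two_zpow_mono (by omega)
  have h2 : (0:ℝ) < 2^(-(j:ℤ)-1) := zpow_pos' _
  simp only [zpow_zero] at h1
  exact ⟨by linarith [hx.1], by linarith [hx.2]⟩

lemma exists_mem_Jk {x : ℝ} (hx : x ∈ Set.Ico (-1:ℝ) 0) : ∃ j, x ∈ Jk j := by
  obtain ⟨hx1, hx2⟩ := hx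
  have hpos : 0 < -x := by linarith
  obtain ⟨n, hn⟩ := exists_pow_lt_of_lt_one hpos (by norm_num : (1:ℝ)/2 < 1)
  have hex : ∃ n : ℕ, ((1:ℝ)/2)^n < -x := ⟨n, hn⟩
  classical
  set N := Nat.find hex with hN
  have hNlt : ((1:ℝ)/2)^N < -x := Nat.find_spec hex
  have hN0 : N ≠ 0 := by
    intro h0
    rw [h0] at hNlt
    simp at hNlt
    linarith
  obtain ⟨j, hj⟩ : ∃ j, N = j + 1 := ⟨N - 1, by omega⟩
  have hjge : ¬ ((1:ℝ)/2)^j < -x := Nat.find_min hex (by omega)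
  push_neg at hjge
  have e : ((1:ℝ)/2)^j = (2:ℝ)^(-(j:ℤ)) := by
    rw [div_pow, one_pow, one_div, ← zpow_natCast (2:ℝ) j, ← zpow_neg]
  have e2 : ((1:ℝ)/2)^N = (2:ℝ)^(-(j:ℤ)-1) := by
    rw [hj, div_pow, one_pow, one_div, ← zpow_natCast (2:ℝ) (j+1), ← zpow_neg]
    congr 1
    push_cast
    ring
  exact ⟨j, mem_Jk_iff.2 ⟨by rw [← e]; linarith, by rw [← e2]; linarith⟩⟩

end NA
namespace NA

lemma Ik_subset (k : ℕ) : dyadic (-(k:ℤ)) (-1) ⊆ Set.Ico (-1:ℝ) 0 := by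
  intro x hx
  obtain ⟨h1, h2⟩ := hx
  push_cast at h1 h2
  have e1 : (2:ℝ)^(-(k:ℤ)) ≤ 2^(0:ℤ) := two_zpow_mono (by omega)
  simp only [zpow_zero] at e1
  have e2 := zpow_pos' (-(k:ℤ))
  constructor <;> nlinarith

lemma haar_zero_outside {k : ℕ} {x : ℝ} (hx : x ∉ Set.Ico (-1:ℝ) 0) :
    haar (-(k:ℤ)) (-1) x = 0 := by
  by_contra h
  exact hx (Ik_subset k (haar_support h))

lemma haar_apply_Jk {j k : ℕ} {x : ℝ} (hx : x ∈ Jk j) :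
    haar (-(k:ℤ)) (-1) x =
      if j < k then 0 else if j = k then -(2:ℝ)^((k:ℝ)/2) else (2:ℝ)^((k:ℝ)/2) := by
  have hxj := mem_Jk_iff.1 hx
  have ecoef : (2:ℝ) ^ (-((-(k:ℤ) : ℤ) : ℝ)/2) = (2:ℝ)^((k:ℝ)/2) := by push_cast; ring_nf
  have hmem2 : x ∈ dyadic (-(k:ℤ)-1) (-2) ↔ j = k := by
    constructor
    · intro h; exact mem_Jk_elim hx h
    · intro h; subst h; exact hx
  have hmem1 : x ∈ dyadic (-(k:ℤ)-1) (-1) ↔ k < j := by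
    unfold dyadic
    rw [Set.mem_Ico]
    push_cast
    constructor
    · rintro ⟨h1, h2⟩
      by_contra hc
      push_neg at hc
      have : (2:ℝ)^(-(k:ℤ)-1) ≤ 2^(-(j:ℤ)-1) := two_zpow_mono (by omega)
      linarith [hxj.2]
    · intro h
      have e1 : (2:ℝ)^(-(j:ℤ)) ≤ 2^(-(k:ℤ)-1) := two_zpow_mono (by omega)
      have e2 : (0:ℝ) < 2^(-(j:ℤ)-1) := zpow_pos' _
      constructor
      · linarith [hxj.1]
      · linarith [hxj.2]
  unfold haar
  rw [show (2 * (-1) + 1 : ℤ) = -1 by norm_num, show (2 * (-1) : ℤ) = -2 by norm_num,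
    show (-(k:ℤ) - 1 : ℤ) = -(k:ℤ)-1 from rfl, ecoef]
  rcases Nat.lt_trichotomy j k with hc | hc | hc
  · have h1 : x ∉ dyadic (-(k:ℤ)-1) (-1) := by simp only [hmem1]; omega
    have h2 : x ∉ dyadic (-(k:ℤ)-1) (-2) := by simp only [hmem2]; omega
    rw [if_pos hc, Set.indicator_of_notMem h1, Set.indicator_of_notMem h2]
    ring
  · have h1 : x ∉ dyadic (-(k:ℤ)-1) (-1) := by simp only [hmem1]; omega
    rw [if_neg (by omega), if_pos hc, Set.indicator_of_notMem h1,
      Set.indicator_of_mem (hmem2.2 hc)]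
    simp only [Pi.one_apply]
    ring
  · have h2 : x ∉ dyadic (-(k:ℤ)-1) (-2) := by simp only [hmem2]; omega
    rw [if_neg (by omega), if_neg (by omega), Set.indicator_of_mem (hmem1.2 hc),
      Set.indicator_of_notMem h2]
    simp only [Pi.one_apply]
    ring

lemma Ico_eq_iUnion_Jk : Set.Ico (-1:ℝ) 0 = ⋃ j, Jk j := by
  apply Set.eq_of_subset_of_subset
  · intro x hx
    obtain ⟨j, hj⟩ := exists_mem_Jk hx
    exact Set.mem_iUnion.2 ⟨j, hj⟩
  · intro x hx
    obtain ⟨j, hj⟩ := Set.mem_iUnion.1 hx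
    exact Jk_subset hj

end NA
namespace NA

variable {α : ℝ}

noncomputable def rr (α : ℝ) : ℝ := (2:ℝ) ^ ((1:ℝ)/2 - α)
noncomputable def AA (α : ℝ) : ℝ := (2 - rr α) / (rr α - 1)
noncomputable def BB (α : ℝ) : ℝ := 1 / (rr α - 1)

lemma rr_gt_one (hα2 : α < 1/2) : 1 < rr α := by
  have h : (2:ℝ)^(0:ℝ) < (2:ℝ)^((1:ℝ)/2 - α) :=
    (Real.rpow_lt_rpow_left_iff (by norm_num)).2 (by linarith)
  rw [Real.rpow_zero] at h
  rw [rr]; exact h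

lemma rr_lt_two (hα1 : 0 < α) : rr α < 2 := by
  have h : (2:ℝ)^((1:ℝ)/2 - α) < (2:ℝ)^(1:ℝ) :=
    (Real.rpow_lt_rpow_left_iff (by norm_num)).2 (by linarith)
  rw [Real.rpow_one] at h
  rw [rr]; exact h

lemma rpow_term_eq (j : ℕ) : (2:ℝ)^(-(j:ℝ)*α) * (2:ℝ)^((j:ℝ)/2) = (rr α)^j := by
  rw [← Real.rpow_add (by norm_num : (0:ℝ) < 2), rr,
    ← Real.rpow_natCast ((2:ℝ)^((1:ℝ)/2 - α)) j,
    ← Real.rpow_mul (by norm_num : (0:ℝ) ≤ 2)]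
  congr 1
  ring

lemma term_eq_zero_outside {x : ℝ} (hx : x ∉ Set.Ico (-1:ℝ) 0) (j : ℕ) :
    (2:ℝ)^(-(j:ℝ)*α) * haar (-(j:ℤ)) (-1) x = 0 := by
  rw [haar_zero_outside hx]; ring

lemma term_eq_zero_of_gt {x : ℝ} {k j : ℕ} (hx : x ∈ Jk k) (h : k < j) :
    (2:ℝ)^(-(j:ℝ)*α) * haar (-(j:ℤ)) (-1) x = 0 := by
  rw [haar_apply_Jk hx, if_pos h]; ring

lemma fLow_summable_at (α : ℝ) (x : ℝ) :
    Summable (fun j : ℕ => (2:ℝ)^(-(j:ℝ)*α) * haar (-(j:ℤ)) (-1) x) := by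
  by_cases hx : x ∈ Set.Ico (-1:ℝ) 0
  · obtain ⟨k, hk⟩ := exists_mem_Jk hx
    apply summable_of_ne_finset_zero (s := Finset.range (k+1))
    intro j hj
    exact term_eq_zero_of_gt hk (by simp at hj; omega)
  · apply summable_of_ne_finset_zero (s := (∅ : Finset ℕ))
    intro j _
    exact term_eq_zero_outside hx j

lemma fLow_hasSum (α : ℝ) (x : ℝ) :
    HasSum (fun j : ℕ => (2:ℝ)^(-(j:ℝ)*α) * haar (-(j:ℤ)) (-1) x) (fLow α x) :=
  (fLow_summable_at α x).hasSum

lemma fLow_zero_outside {x : ℝ} (hx : x ∉ Set.Ico (-1:ℝ) 0) : fLow α x = 0 := by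
  rw [fLow]
  rw [tsum_eq_sum (s := (∅ : Finset ℕ)) (fun j _ => term_eq_zero_outside hx j)]
  simp

lemma measurable_fLow (α : ℝ) : Measurable (fLow α) := by
  apply measurable_of_tendsto_metrizable
    (f := fun n x => ∑ j ∈ Finset.range n, (2:ℝ)^(-(j:ℝ)*α) * haar (-(j:ℤ)) (-1) x)
  · intro n
    exact Finset.measurable_sum _ (fun j _ => ((haar_measurable _ _).const_mul _))
  · rw [tendsto_pi_nhds]
    intro x
    exact (fLow_hasSum α x).tendsto_sum_nat

lemma fLow_apply_Jk (hα2 : α < 1/2) {k : ℕ} {x : ℝ} (hx : x ∈ Jk k) :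
    fLow α x = AA α * (rr α)^k - BB α := by
  have hr1 : 1 < rr α := rr_gt_one hα2
  have hrne : rr α - 1 ≠ 0 := by linarith
  rw [fLow, tsum_eq_sum (s := Finset.range (k+1))
    (fun j hj => term_eq_zero_of_gt hx (by simp at hj; omega))]
  rw [Finset.sum_range_succ]
  have hterm : ∀ j : ℕ, j < k → (2:ℝ)^(-(j:ℝ)*α) * haar (-(j:ℤ)) (-1) x = (rr α)^j := by
    intro j hj
    rw [haar_apply_Jk hx, if_neg (by omega), if_neg (by omega)]
    exact rpow_term_eq j
  rw [Finset.sum_congr rfl (fun j hj => hterm j (by simp at hj; omega))]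
  rw [haar_apply_Jk hx, if_neg (by omega), if_pos rfl]
  rw [geom_sum_eq (by linarith : rr α ≠ 1)]
  have : (2:ℝ)^(-(k:ℝ)*α) * -((2:ℝ)^((k:ℝ)/2)) = -((rr α)^k) := by
    rw [← rpow_term_eq k]; ring
  rw [this, AA, BB]
  field_simp
  ring

end NA
namespace NA

lemma Jk_measurable (j : ℕ) : MeasurableSet (Jk j) := measurableSet_dyadic _ _

lemma Jk_pairwise : Pairwise (Function.onFun Disjoint Jk) := by
  intro i j hij
  rw [Function.onFun, Set.disjoint_left]
  intro x h1 h2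
  exact hij (mem_Jk_elim h1 h2)

lemma volume_Jk (j : ℕ) : MeasureTheory.volume (Jk j) = ENNReal.ofReal ((2:ℝ)^(-(j:ℤ)-1)) :=
  volume_dyadic _ _

/-- Master lemma: integral of a function constant on each `Jk j` and vanishing outside `[-1,0)`. -/
lemma integral_partition (G : ℝ → ℝ) (hGm : Measurable G)
    (h0 : ∀ x ∉ Set.Ico (-1:ℝ) 0, G x = 0) (c : ℕ → ℝ)
    (hc : ∀ j, ∀ x ∈ Jk j, G x = c j)
    (hs : Summable (fun j : ℕ => (2:ℝ)^(-(j:ℤ)-1) * |c j|)) :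
    Integrable G volume ∧ ∫ x, G x = ∑' j : ℕ, (2:ℝ)^(-(j:ℤ)-1) * c j := by
  have hind : G = (Set.Ico (-1:ℝ) 0).indicator G := by
    funext x
    by_cases hx : x ∈ Set.Ico (-1:ℝ) 0
    · rw [Set.indicator_of_mem hx]
    · rw [Set.indicator_of_notMem hx, h0 x hx]
  have hlint : ∀ j : ℕ, ∫⁻ x in Jk j, (‖G x‖₊ : ℝ≥0∞) =
      ENNReal.ofReal ((2:ℝ)^(-(j:ℤ)-1) * |c j|) := by
    intro j
    rw [setLIntegral_congr_fun (Jk_measurable j)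
      (fun x hx => by rw [hc j x hx])]
    rw [setLIntegral_const, volume_Jk]
    rw [show ((‖c j‖₊ : ℝ≥0∞)) = ENNReal.ofReal (|c j|) by
      rw [ENNReal.ofReal, Real.toNNReal_eq_nnnorm_of_nonneg (abs_nonneg _)]
      norm_num]
    rw [← ENNReal.ofReal_mul (abs_nonneg _)]
    congr 1
    ring
  have hIntOn : IntegrableOn G (Set.Ico (-1:ℝ) 0) volume := by
    constructor
    · exact hGm.aestronglyMeasurable.restrict
    · rw [hasFiniteIntegral_iff_norm]
      have : ∫⁻ x in Set.Ico (-1:ℝ) 0, ENNReal.ofReal ‖G x‖ =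
          ∑' j : ℕ, ∫⁻ x in Jk j, ENNReal.ofReal ‖G x‖ := by
        rw [Ico_eq_iUnion_Jk]
        exact MeasureTheory.lintegral_iUnion Jk_measurable Jk_pairwise _
      rw [this]
      have heq : ∀ j : ℕ, ∫⁻ x in Jk j, ENNReal.ofReal ‖G x‖ =
          ENNReal.ofReal ((2:ℝ)^(-(j:ℤ)-1) * |c j|) := by
        intro j
        rw [← hlint j]
        congr 1
        funext x
        rw [ofReal_norm, enorm_eq_nnnorm]
      simp_rw [heq]
      rw [← ENNReal.ofReal_tsum_of_nonneg (fun j => by positivity) hs]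
      exact ENNReal.ofReal_lt_top
  have hInt : Integrable G volume := by
    rw [hind]
    exact (integrable_indicator_iff measurableSet_Ico).2 hIntOn
  refine ⟨hInt, ?_⟩
  have h1 : ∫ x, G x = ∫ x in Set.Ico (-1:ℝ) 0, G x := by
    conv_lhs => rw [hind]
    exact integral_indicator measurableSet_Ico
  rw [h1, Ico_eq_iUnion_Jk,
    MeasureTheory.integral_iUnion Jk_measurable Jk_pairwise
      (by rw [← Ico_eq_iUnion_Jk]; exact hIntOn)]
  congr 1
  funext j
  rw [setIntegral_congr_fun (Jk_measurable j) (fun x hx => hc j x hx)]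
  rw [setIntegral_const, measureReal_def, volume_Jk, ENNReal.toReal_ofReal (le_of_lt (zpow_pos' _))]
  rw [smul_eq_mul]

end NA
namespace NA

lemma haar_abs_le (n k : ℤ) (x : ℝ) : |haar n k x| ≤ (2:ℝ)^(-(n:ℝ)/2) := by
  unfold haar
  rw [abs_mul, abs_of_pos (Real.rpow_pos_of_pos (by norm_num) _)]
  have h1 : |(dyadic (n-1) (2*k+1)).indicator (1:ℝ→ℝ) x - (dyadic (n-1) (2*k)).indicator 1 x| ≤ 1 := by
    have e1 : ∀ (s : Set ℝ), s.indicator (1:ℝ→ℝ) x = if x ∈ s then 1 else 0 := fun s => by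
      by_cases h : x ∈ s
      · rw [Set.indicator_of_mem h, if_pos h]; rfl
      · rw [Set.indicator_of_notMem h, if_neg h]
    rw [e1, e1]
    split_ifs <;> norm_num
  nlinarith [Real.rpow_pos_of_pos (by norm_num : (0:ℝ) < 2) (-(n:ℝ)/2), h1,
    abs_nonneg ((dyadic (n-1) (2*k+1)).indicator (1:ℝ→ℝ) x - (dyadic (n-1) (2*k)).indicator 1 x)]

lemma innH_fLow (hα1 : 0 < α) (hα2 : α < 1/2) (n k : ℤ) :
    innH (fLow α) n k = if n ≤ 0 ∧ k = -1 then (2:ℝ)^((n:ℝ)*α) else 0 := by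
  have key : innH (fLow α) n k
      = ∑' j : ℕ, (2:ℝ)^(-(j:ℝ)*α) * ∫ x, haar (-(j:ℤ)) (-1) x * haar n k x := by
    rw [innH]
    have e1 : ∀ x, fLow α x * haar n k x
        = ∑' j : ℕ, (2:ℝ)^(-(j:ℝ)*α) * haar (-(j:ℤ)) (-1) x * haar n k x := by
      intro x
      rw [fLow, ← tsum_mul_right]
    simp_rw [e1]
    rw [MeasureTheory.integral_tsum]
    · congr 1
      funext j
      simp_rw [mul_assoc]
      exact MeasureTheory.integral_const_mul _ _
    · intro j
      exact (((haar_measurable _ _).const_mul _).mul (haar_measurable _ _)).aestronglyMeasurable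
    · -- finiteness
      have hbd : ∀ j : ℕ, ∫⁻ x, (‖(2:ℝ)^(-(j:ℝ)*α) * haar (-(j:ℤ)) (-1) x * haar n k x‖₊ : ℝ≥0∞)
          ≤ ENNReal.ofReal ((2:ℝ)^(-(n:ℝ)/2) * (rr α / 2)^j) := by
        intro j
        have hpt : ∀ x, (‖(2:ℝ)^(-(j:ℝ)*α) * haar (-(j:ℤ)) (-1) x * haar n k x‖₊ : ℝ≥0∞)
            ≤ (dyadic (-(j:ℤ)) (-1)).indicator
                (fun _ => ENNReal.ofReal ((2:ℝ)^(-(j:ℝ)*α) * (2:ℝ)^((j:ℝ)/2) * (2:ℝ)^(-(n:ℝ)/2))) x := by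
          intro x
          by_cases hx : x ∈ dyadic (-(j:ℤ)) (-1)
          · rw [Set.indicator_of_mem hx]
            rw [← enorm_eq_nnnorm, ← ofReal_norm]
            apply ENNReal.ofReal_le_ofReal
            rw [norm_mul, norm_mul, Real.norm_eq_abs, Real.norm_eq_abs, Real.norm_eq_abs]
            have b1 := haar_abs_le (-(j:ℤ)) (-1) x
            have b2 := haar_abs_le n k x
            have e2 : -((-(j:ℤ) : ℤ):ℝ)/2 = (j:ℝ)/2 := by push_cast; ring
            rw [e2] at b1
            have h2 : |(2:ℝ)^(-(j:ℝ)*α)| = (2:ℝ)^(-(j:ℝ)*α) :=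
              abs_of_pos (Real.rpow_pos_of_pos (by norm_num) _)
            rw [h2]
            have p1 : (0:ℝ) < (2:ℝ)^(-(j:ℝ)*α) := Real.rpow_pos_of_pos (by norm_num) _
            have p2 : (0:ℝ) ≤ |haar (-(j:ℤ)) (-1) x| := abs_nonneg _
            have p3 : (0:ℝ) ≤ |haar n k x| := abs_nonneg _
            have p4 : (0:ℝ) < (2:ℝ)^((j:ℝ)/2) := Real.rpow_pos_of_pos (by norm_num) _
            have hmm : |haar (-(j:ℤ)) (-1) x| * |haar n k x| ≤ (2:ℝ)^((j:ℝ)/2) * (2:ℝ)^(-(n:ℝ)/2) :=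
              mul_le_mul b1 b2 p3 (le_of_lt p4)
            nlinarith
          · have hz : haar (-(j:ℤ)) (-1) x = 0 := by
              by_contra h
              exact hx (haar_support h)
            rw [hz]
            simp
        calc ∫⁻ x, (‖(2:ℝ)^(-(j:ℝ)*α) * haar (-(j:ℤ)) (-1) x * haar n k x‖₊ : ℝ≥0∞)
            ≤ ∫⁻ x, (dyadic (-(j:ℤ)) (-1)).indicator
                (fun _ => ENNReal.ofReal ((2:ℝ)^(-(j:ℝ)*α) * (2:ℝ)^((j:ℝ)/2) * (2:ℝ)^(-(n:ℝ)/2))) x :=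
              MeasureTheory.lintegral_mono hpt
          _ = ENNReal.ofReal ((2:ℝ)^(-(j:ℝ)*α) * (2:ℝ)^((j:ℝ)/2) * (2:ℝ)^(-(n:ℝ)/2))
                * MeasureTheory.volume (dyadic (-(j:ℤ)) (-1)) := by
              rw [MeasureTheory.lintegral_indicator (measurableSet_dyadic _ _)]
              rw [setLIntegral_const]
          _ = ENNReal.ofReal ((2:ℝ)^(-(n:ℝ)/2) * (rr α / 2)^j) := by
              rw [volume_dyadic, ← ENNReal.ofReal_mul (by positivity)]
              congr 1
              rw [rpow_term_eq j]
              have e3 : (2:ℝ)^(-(j:ℤ)) = ((1:ℝ)/2)^j := by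
                rw [div_pow, one_pow, one_div, ← zpow_natCast (2:ℝ) j, ← zpow_neg]
              rw [e3, div_pow]
              field_simp
              rw [one_pow, mul_one, ← mul_pow]; congr 1; ring
      have hr0 : (0:ℝ) < rr α := lt_trans one_pos (rr_gt_one hα2)
      have hrh : (0:ℝ) ≤ rr α / 2 := by linarith
      have hnn : ∀ j : ℕ, (0:ℝ) ≤ (2:ℝ)^(-(n:ℝ)/2) * (rr α / 2)^j := fun j =>
        mul_nonneg (le_of_lt (Real.rpow_pos_of_pos (by norm_num) _)) (pow_nonneg hrh j)
      have hsum : Summable (fun j : ℕ => (2:ℝ)^(-(n:ℝ)/2) * (rr α / 2)^j) := by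
        apply Summable.mul_left
        apply summable_geometric_of_lt_one hrh
        have := rr_lt_two hα1
        linarith
      exact ne_top_of_le_ne_top ENNReal.ofReal_ne_top
        (le_trans (ENNReal.tsum_le_tsum hbd)
          (le_of_eq (ENNReal.ofReal_tsum_of_nonneg hnn hsum).symm))
  rw [key]
  simp_rw [integral_haar_mul_haar]
  by_cases h : n ≤ 0 ∧ k = -1
  · rw [if_pos h]
    obtain ⟨hn, hk⟩ := h
    have hm : (-n).toNat = -n := Int.toNat_of_nonneg (by omega)
    have hpair : ((-(((-n).toNat):ℤ)), (-1:ℤ)) = (n, k) := by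
      rw [hk]
      congr 1
      omega
    rw [tsum_eq_single (-n).toNat]
    · rw [if_pos hpair, mul_one]
      congr 1
      have hcast : (((-n).toNat : ℕ) : ℝ) = -(n:ℝ) := by exact_mod_cast hm
      rw [hcast]
      ring
    · intro j hj
      rw [if_neg, mul_zero]
      intro hc
      apply hj
      have : -(j:ℤ) = n := (Prod.mk.injEq .. ▸ hc).1
      omega
  · rw [if_neg h]
    have : ∀ j : ℕ, (2:ℝ)^(-(j:ℝ)*α) * (if ((-(j:ℕ):ℤ), (-1:ℤ)) = (n, k) then (1:ℝ) else 0) = 0 := by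
      intro j
      rw [if_neg, mul_zero]
      intro hc
      obtain ⟨h1, h2⟩ := Prod.mk.injEq .. ▸ hc
      exact h ⟨by omega, h2.symm⟩
    simp_rw [this]
    exact tsum_zero

end NA
namespace NA

lemma zpow_neg_succ_eq (j : ℕ) : (2:ℝ)^(-(j:ℤ)-1) = ((1:ℝ)/2)^j / 2 := by
  have e : ((1:ℝ)/2)^j = (2:ℝ)^(-(j:ℤ)) := by
    rw [div_pow, one_pow, one_div, ← zpow_natCast (2:ℝ) j, ← zpow_neg]
  rw [e, zpow_sub_one₀ (by norm_num : (2:ℝ) ≠ 0)]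
  ring

lemma expand_j (r A B : ℝ) (j : ℕ) :
    ((1:ℝ)/2)^j / 2 * (A * r^j - B)^2
      = A^2/2 * (r^2/2)^j - A*B*(r/2)^j + B^2/2 * (1/2)^j := by
  have h1 : ((r:ℝ)^2/2)^j = (r^j)^2 / 2^j := by
    rw [div_pow, ← pow_mul, ← pow_mul, mul_comm 2 j]
  have h2 : ((r:ℝ)/2)^j = r^j / 2^j := div_pow r 2 j
  have h3 : ((1:ℝ)/2)^j = 1 / 2^j := by rw [div_pow, one_pow]
  rw [h1, h2, h3]
  have h4 : (2:ℝ)^j ≠ 0 := by positivity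
  field_simp
  ring

lemma vv_expand (α : ℝ) (j : ℕ) :
    (2:ℝ)^(-(j:ℤ)-1) * (AA α * rr α^j - BB α)^2
      = AA α^2/2 * (rr α^2/2)^j - AA α*BB α*(rr α/2)^j + BB α^2/2 * (1/2)^j := by
  rw [zpow_neg_succ_eq, expand_j]

lemma rr_sq (α : ℝ) : rr α^2 = (2:ℝ)^(1 - 2*α) := by
  rw [rr, ← Real.rpow_natCast ((2:ℝ)^((1:ℝ)/2 - α)) 2, ← Real.rpow_mul (by norm_num : (0:ℝ) ≤ 2)]
  congr 1
  push_cast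
  ring

lemma rr_sq_bounds (hα1 : 0 < α) (hα2 : α < 1/2) : 1 < rr α^2 ∧ rr α^2 < 2 := by
  rw [rr_sq]
  constructor
  · have h : (2:ℝ)^(0:ℝ) < (2:ℝ)^(1 - 2*α) :=
      (Real.rpow_lt_rpow_left_iff (by norm_num)).2 (by linarith)
    rwa [Real.rpow_zero] at h
  · have h : (2:ℝ)^(1 - 2*α) < (2:ℝ)^(1:ℝ) :=
      (Real.rpow_lt_rpow_left_iff (by norm_num)).2 (by linarith)
    rwa [Real.rpow_one] at h

lemma x1_mem (hα1 : 0 < α) (hα2 : α < 1/2) : 1/2 < rr α^2/2 ∧ rr α^2/2 < 1 := by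
  obtain ⟨h1, h2⟩ := rr_sq_bounds hα1 hα2
  constructor <;> linarith

lemma x2_mem (hα1 : 0 < α) (hα2 : α < 1/2) : 1/2 < rr α/2 ∧ rr α/2 < 1 := by
  have h1 := rr_gt_one hα2
  have h2 := rr_lt_two hα1
  constructor <;> nlinarith

lemma summable_geom_x1 (hα1 : 0 < α) (hα2 : α < 1/2) :
    Summable (fun j : ℕ => (rr α^2/2)^j) := by
  obtain ⟨h1, h2⟩ := x1_mem hα1 hα2
  exact summable_geometric_of_lt_one (by linarith) h2

lemma summable_geom_x2 (hα1 : 0 < α) (hα2 : α < 1/2) :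
    Summable (fun j : ℕ => (rr α/2)^j) := by
  obtain ⟨h1, h2⟩ := x2_mem hα1 hα2
  exact summable_geometric_of_lt_one (by linarith) h2

lemma summable_geom_half : Summable (fun j : ℕ => ((1:ℝ)/2)^j) :=
  summable_geometric_of_lt_one (by norm_num) (by norm_num)

lemma summable_vv (hα1 : 0 < α) (hα2 : α < 1/2) :
    Summable (fun j : ℕ => (2:ℝ)^(-(j:ℤ)-1) * (AA α * rr α^j - BB α)^2) := by
  have := ((((summable_geom_x1 hα1 hα2).mul_left (AA α^2/2)).sub
    ((summable_geom_x2 hα1 hα2).mul_left (AA α*BB α))).add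
    (summable_geom_half.mul_left (BB α^2/2)))
  apply this.congr
  intro j
  rw [vv_expand]

lemma integrable_fLow_sq (hα1 : 0 < α) (hα2 : α < 1/2) :
    Integrable (fun x => fLow α x ^ 2) volume ∧
      ∫ x, fLow α x ^ 2 = ∑' j : ℕ, (2:ℝ)^(-(j:ℤ)-1) * (AA α * rr α^j - BB α)^2 := by
  apply integral_partition _ ((measurable_fLow α).pow_const 2)
  · intro x hx
    rw [fLow_zero_outside hx]
    norm_num
  · intro j x hx
    rw [fLow_apply_Jk hα2 hx]
  · apply (summable_vv hα1 hα2).congr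
    intro j
    rw [abs_of_nonneg (sq_nonneg _)]

lemma memLp_fLow (hα1 : 0 < α) (hα2 : α < 1/2) : MemLp (fLow α) 2 volume := by
  rw [MeasureTheory.memLp_two_iff_integrable_sq (measurable_fLow α).aestronglyMeasurable]
  exact (integrable_fLow_sq hα1 hα2).1

lemma summable_coeff_fLow (s : ℝ) (hs : s < α) (hα1 : 0 < α) (hα2 : α < 1/2) :
    Summable fun p : ℤ × ℤ => (2:ℝ)^(-2*s*(p.1:ℝ)) * innH (fLow α) p.1 p.2 ^ 2 := by
  set g := fun p : ℤ × ℤ => (2:ℝ)^(-2*s*(p.1:ℝ)) * innH (fLow α) p.1 p.2 ^ 2 with hg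
  set e : ℕ → ℤ × ℤ := fun m => (-(m:ℤ), -1) with he
  have hinj : Function.Injective e := by
    intro a b hab
    have : -(a:ℤ) = -(b:ℤ) := (Prod.mk.injEq .. ▸ hab).1
    omega
  have hsupp : ∀ p ∉ Set.range e, g p = 0 := by
    rintro ⟨n, k⟩ hp
    have : ¬ (n ≤ 0 ∧ k = -1) := by
      rintro ⟨h1, h2⟩
      apply hp
      refine ⟨(-n).toNat, ?_⟩
      rw [he]
      subst h2
      have hmn : (((-n).toNat : ℕ) : ℤ) = -n := Int.toNat_of_nonneg (by omega)
      simp only [hmn]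
      norm_num
    rw [hg]
    simp only
    rw [innH_fLow hα1 hα2, if_neg this]
    ring
  rw [← hinj.summable_iff hsupp]
  have hcomp : ∀ m : ℕ, (g ∘ e) m = ((2:ℝ)^(2*s - 2*α))^m := by
    intro m
    simp only [Function.comp, hg, he]
    rw [innH_fLow hα1 hα2, if_pos ⟨by omega, rfl⟩]
    push_cast
    rw [sq, ← Real.rpow_add (by norm_num : (0:ℝ) < 2),
      ← Real.rpow_add (by norm_num : (0:ℝ) < 2),
      ← Real.rpow_natCast ((2:ℝ)^(2*s-2*α)) m,
      ← Real.rpow_mul (by norm_num : (0:ℝ) ≤ 2)]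
    congr 1
    ring
  apply Summable.congr _ (fun m => (hcomp m).symm)
  apply summable_geometric_of_lt_one
  · exact le_of_lt (Real.rpow_pos_of_pos (by norm_num) _)
  · apply Real.rpow_lt_one_of_one_lt_of_neg (by norm_num)
    linarith

lemma memHs_fLow (s : ℝ) (hs : s < α) (hα1 : 0 < α) (hα2 : α < 1/2) :
    memHs s (fLow α) :=
  ⟨memLp_fLow hα1 hα2, summable_coeff_fLow s hs hα1 hα2⟩

end NA
namespace NA

noncomputable def PP (α : ℝ) : ℝ := AA α^2/2 * ((rr α^2/2)/(1 - rr α^2/2) - 1)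
noncomputable def QQ (α : ℝ) : ℝ := AA α * BB α * ((rr α/2)/(1 - rr α/2) - 1)

lemma AA_pos (hα1 : 0 < α) (hα2 : α < 1/2) : 0 < AA α := by
  have h1 := rr_gt_one hα2
  have h2 := rr_lt_two hα1
  apply div_pos <;> linarith

lemma BB_pos (hα2 : α < 1/2) : 0 < BB α := by
  have h1 := rr_gt_one hα2
  apply div_pos <;> linarith

lemma PP_pos (hα1 : 0 < α) (hα2 : α < 1/2) : 0 < PP α := by
  obtain ⟨h1, h2⟩ := x1_mem hα1 hα2
  have hA := AA_pos hα1 hα2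
  have hd : 0 < 1 - rr α^2/2 := by linarith
  have hgt : 1 < (rr α^2/2)/(1 - rr α^2/2) := by
    rw [lt_div_iff₀ hd]; linarith
  rw [PP]
  apply mul_pos (by positivity)
  linarith

lemma QQ_pos (hα1 : 0 < α) (hα2 : α < 1/2) : 0 < QQ α := by
  obtain ⟨h1, h2⟩ := x2_mem hα1 hα2
  have hA := AA_pos hα1 hα2
  have hB := BB_pos hα2
  have hd : 0 < 1 - rr α/2 := by linarith
  have hgt : 1 < (rr α/2)/(1 - rr α/2) := by
    rw [lt_div_iff₀ hd]; linarith
  rw [QQ]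
  exact mul_pos (mul_pos hA hB) (by linarith)

set_option maxHeartbeats 2000000 in
lemma innH_fLow_sq (hα1 : 0 < α) (hα2 : α < 1/2) (k : ℕ) :
    innH (fun x => fLow α x ^ 2) (-(k:ℤ)) (-1)
      = (2:ℝ)^((k:ℝ)/2) * (PP α * (rr α^2/2)^k - QQ α * (rr α/2)^k) := by
  have hr1 : 1 < rr α := rr_gt_one hα2
  obtain ⟨hx1a, hx1b⟩ := x1_mem hα1 hα2
  obtain ⟨hx2a, hx2b⟩ := x2_mem hα1 hα2
  set c : ℕ → ℝ := fun j => (AA α * rr α^j - BB α)^2 *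
    (if j < k then 0 else if j = k then -(2:ℝ)^((k:ℝ)/2) else (2:ℝ)^((k:ℝ)/2)) with hc
  have hcval : ∀ j, c j = (AA α * rr α^j - BB α)^2 *
      (if j < k then 0 else if j = k then -(2:ℝ)^((k:ℝ)/2) else (2:ℝ)^((k:ℝ)/2)) := fun j => rfl
  have hkpos : (0:ℝ) < (2:ℝ)^((k:ℝ)/2) := Real.rpow_pos_of_pos (by norm_num) _
  have habs : ∀ j, |c j| ≤ (AA α * rr α^j - BB α)^2 * (2:ℝ)^((k:ℝ)/2) := by
    intro j
    rw [hcval, abs_mul, abs_of_nonneg (sq_nonneg _)]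
    apply mul_le_mul_of_nonneg_left _ (sq_nonneg _)
    split_ifs
    · simp [le_of_lt hkpos]
    · rw [abs_neg, abs_of_pos hkpos]
    · rw [abs_of_pos hkpos]
  have hmaj : Summable (fun j : ℕ =>
      (2:ℝ)^((k:ℝ)/2) * ((2:ℝ)^(-(j:ℤ)-1) * (AA α * rr α^j - BB α)^2)) :=
    (summable_vv hα1 hα2).mul_left _
  have hsum : Summable (fun j : ℕ => (2:ℝ)^(-(j:ℤ)-1) * |c j|) := by
    apply Summable.of_nonneg_of_le (fun j => by positivity) (fun j => ?_) hmaj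
    calc (2:ℝ)^(-(j:ℤ)-1) * |c j|
        ≤ (2:ℝ)^(-(j:ℤ)-1) * ((AA α * rr α^j - BB α)^2 * (2:ℝ)^((k:ℝ)/2)) :=
          mul_le_mul_of_nonneg_left (habs j) (le_of_lt (zpow_pos' _))
      _ = (2:ℝ)^((k:ℝ)/2) * ((2:ℝ)^(-(j:ℤ)-1) * (AA α * rr α^j - BB α)^2) := by ring
  have hpart := integral_partition (fun x => fLow α x ^ 2 * haar (-(k:ℤ)) (-1) x)
    (((measurable_fLow α).pow_const 2).mul (haar_measurable _ _))
    (fun x hx => by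
      show fLow α x ^ 2 * haar (-(k:ℤ)) (-1) x = 0
      rw [fLow_zero_outside hx]; ring)
    c
    (fun j x hx => by
      show fLow α x ^ 2 * haar (-(k:ℤ)) (-1) x = c j
      rw [fLow_apply_Jk hα2 hx, haar_apply_Jk hx, hcval])
    hsum
  have hF : Summable (fun j : ℕ => (2:ℝ)^(-(j:ℤ)-1) * c j) := by
    apply Summable.of_abs
    apply hsum.congr
    intro j
    rw [abs_mul ((2:ℝ)^(-(j:ℤ)-1)) (c j), abs_of_pos (zpow_pos' _)]
  have goal1 : innH (fun x => fLow α x ^ 2) (-(k:ℤ)) (-1) = ∑' j : ℕ, (2:ℝ)^(-(j:ℤ)-1) * c j := by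
    simp only [innH]
    exact hpart.2
  rw [goal1]
  have hF0 : ∀ j ∈ Finset.range k, (2:ℝ)^(-(j:ℤ)-1) * c j = 0 := by
    intro j hj
    rw [hcval, if_pos (Finset.mem_range.1 hj)]
    ring
  rw [(hF.sum_add_tsum_nat_add k).symm, Finset.sum_eq_zero hF0, zero_add]
  have hFk : Summable (fun i : ℕ => (2:ℝ)^(-((i+k:ℕ):ℤ)-1) * c (i+k)) :=
    (summable_nat_add_iff k).2 hF
  rw [hFk.tsum_eq_zero_add]
  have e0 : (2:ℝ)^(-((0+k:ℕ):ℤ)-1) * c (0+k)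
      = -((2:ℝ)^((k:ℝ)/2)) * (AA α^2/2 * (rr α^2/2)^k - AA α*BB α*(rr α/2)^k
          + BB α^2/2 * (1/2)^k) := by
    rw [show (0+k:ℕ) = k from by omega, hcval, if_neg (by omega), if_pos rfl,
      show (2:ℝ)^(-(k:ℤ)-1) * ((AA α * rr α^k - BB α)^2 * -(2:ℝ)^((k:ℝ)/2))
        = ((2:ℝ)^(-(k:ℤ)-1) * (AA α * rr α^k - BB α)^2) * -(2:ℝ)^((k:ℝ)/2) by ring,
      vv_expand α k]
    ring
  have e1 : ∀ i : ℕ, (2:ℝ)^(-((i+1+k:ℕ):ℤ)-1) * c (i+1+k)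
      = ((2:ℝ)^((k:ℝ)/2) * (AA α^2/2) * ((rr α^2/2) * (rr α^2/2)^k)) * (rr α^2/2)^i
        - ((2:ℝ)^((k:ℝ)/2) * (AA α*BB α) * ((rr α/2) * (rr α/2)^k)) * (rr α/2)^i
        + ((2:ℝ)^((k:ℝ)/2) * (BB α^2/2) * ((1/2) * ((1:ℝ)/2)^k)) * ((1:ℝ)/2)^i := by
    intro i
    rw [hcval, if_neg (by omega), if_neg (by omega),
      show (2:ℝ)^(-((i+1+k:ℕ):ℤ)-1) * ((AA α * rr α^(i+1+k) - BB α)^2 * (2:ℝ)^((k:ℝ)/2))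
        = ((2:ℝ)^(-((i+1+k:ℕ):ℤ)-1) * (AA α * rr α^(i+1+k) - BB α)^2) * (2:ℝ)^((k:ℝ)/2) by ring,
      vv_expand α (i+1+k)]
    have ee : ∀ x : ℝ, x^(i+1+k) = x^i * (x * x^k) := by
      intro x
      rw [pow_add, pow_add, pow_one]
      ring
    rw [ee, ee, ee]
    ring
  have hs1 : Summable (fun i : ℕ =>
      ((2:ℝ)^((k:ℝ)/2) * (AA α^2/2) * ((rr α^2/2) * (rr α^2/2)^k)) * (rr α^2/2)^i) :=
    (summable_geom_x1 hα1 hα2).mul_left _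
  have hs2 : Summable (fun i : ℕ =>
      ((2:ℝ)^((k:ℝ)/2) * (AA α*BB α) * ((rr α/2) * (rr α/2)^k)) * (rr α/2)^i) :=
    (summable_geom_x2 hα1 hα2).mul_left _
  have hs3 : Summable (fun i : ℕ =>
      ((2:ℝ)^((k:ℝ)/2) * (BB α^2/2) * ((1/2) * ((1:ℝ)/2)^k)) * ((1:ℝ)/2)^i) :=
    summable_geom_half.mul_left _
  have e2 : ∑' i : ℕ, (2:ℝ)^(-((i+1+k:ℕ):ℤ)-1) * c (i+1+k)
      = ((2:ℝ)^((k:ℝ)/2) * (AA α^2/2) * ((rr α^2/2) * (rr α^2/2)^k)) * (1 - rr α^2/2)⁻¹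
        - ((2:ℝ)^((k:ℝ)/2) * (AA α*BB α) * ((rr α/2) * (rr α/2)^k)) * (1 - rr α/2)⁻¹
        + ((2:ℝ)^((k:ℝ)/2) * (BB α^2/2) * ((1/2) * ((1:ℝ)/2)^k)) * (1 - (1:ℝ)/2)⁻¹ := by
    rw [tsum_congr e1, (hs1.sub hs2).tsum_add hs3, hs1.tsum_sub hs2,
      tsum_mul_left, tsum_mul_left, tsum_mul_left,
      tsum_geometric_of_lt_one (by linarith) hx1b,
      tsum_geometric_of_lt_one (by linarith) hx2b,
      tsum_geometric_of_lt_one (by norm_num) (by norm_num)]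
  rw [e0, e2]
  have hr2 := rr_lt_two hα1
  obtain ⟨hq1, hq2⟩ := rr_sq_bounds hα1 hα2
  have hd1 : (2:ℝ) - rr α^2 ≠ 0 := by intro h; linarith
  have hd2 : (2:ℝ) - rr α ≠ 0 := by intro h; linarith
  have i1 : (1 - rr α^2/2)⁻¹ = 2/(2 - rr α^2) := by
    rw [show (1:ℝ) - rr α^2/2 = (2 - rr α^2)/2 by ring, inv_div]
  have i2 : (1 - rr α/2)⁻¹ = 2/(2 - rr α) := by
    rw [show (1:ℝ) - rr α/2 = (2 - rr α)/2 by ring, inv_div]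
  have i3 : (1 - (1:ℝ)/2)⁻¹ = 2 := by norm_num
  have iP : PP α = AA α^2 * (rr α^2 - 1)/(2 - rr α^2) := by
    rw [PP, show (1:ℝ) - rr α^2/2 = (2 - rr α^2)/2 by ring]
    field_simp
    ring
  have iQ : QQ α = 2 * AA α * BB α * (rr α - 1)/(2 - rr α) := by
    rw [QQ, show (1:ℝ) - rr α/2 = (2 - rr α)/2 by ring]
    field_simp
    ring
  rw [i1, i2, i3, iP, iQ]
  field_simp
  ring

end NA
namespace NA

lemma rpow_npow_eq (b : ℝ) (c : ℝ) (k : ℕ) (hb : (0:ℝ) ≤ b) :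
    ((b:ℝ)^c)^k = b^(c*(k:ℝ)) := by
  rw [← Real.rpow_natCast (b^c) k, ← Real.rpow_mul hb]

lemma not_summable_sq {s α : ℝ} (hs0 : 0 < s) (hs1 : s < 1/2) (h1 : s < α)
    (h2 : α < s/2 + 1/4) :
    ¬ Summable (fun p : ℤ × ℤ =>
      (2:ℝ)^(-2*s*(p.1:ℝ)) * innH (fun x => fLow α x ^ 2) p.1 p.2 ^ 2) := by
  have hα1 : 0 < α := lt_trans hs0 h1
  have hα2 : α < 1/2 := by linarith
  intro hsumm
  set g := fun p : ℤ × ℤ =>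
    (2:ℝ)^(-2*s*(p.1:ℝ)) * innH (fun x => fLow α x ^ 2) p.1 p.2 ^ 2 with hg
  set e : ℕ → ℤ × ℤ := fun m => (-(m:ℤ), -1) with he
  have hinj : Function.Injective e := by
    intro a b hab
    have : -(a:ℤ) = -(b:ℤ) := (Prod.mk.injEq .. ▸ hab).1
    omega
  -- value of g (e k)
  have hX : (2:ℝ)^(s+1/2) * (rr α^2/2) = (2:ℝ)^(s + 1/2 - 2*α) := by
    rw [show rr α^2/2 = (2:ℝ)^(1-2*α) * (2:ℝ)^(-(1:ℝ)) by
      rw [rr_sq, Real.rpow_neg (by norm_num), Real.rpow_one]; ring,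
      ← mul_assoc, ← Real.rpow_add (by norm_num : (0:ℝ) < 2),
      ← Real.rpow_add (by norm_num : (0:ℝ) < 2)]
    congr 1
    ring
  have hY : (2:ℝ)^(s+1/2) * (rr α/2) = (2:ℝ)^(s - α) := by
    rw [show rr α/2 = (2:ℝ)^((1:ℝ)/2-α) * (2:ℝ)^(-(1:ℝ)) by
      rw [rr, Real.rpow_neg (by norm_num), Real.rpow_one]; ring,
      ← mul_assoc, ← Real.rpow_add (by norm_num : (0:ℝ) < 2),
      ← Real.rpow_add (by norm_num : (0:ℝ) < 2)]
    congr 1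
    ring
  have hgk : ∀ k : ℕ, g (e k)
      = (PP α * ((2:ℝ)^(s+1/2-2*α))^k - QQ α * ((2:ℝ)^(s-α))^k)^2 := by
    intro k
    have hcast : ((-(k:ℤ) : ℤ) : ℝ) = -(k:ℝ) := by push_cast; ring
    have hfact : (2:ℝ)^(-2*s*(-(k:ℝ))) * ((2:ℝ)^((k:ℝ)/2))^2 = (((2:ℝ)^(s+1/2))^k)^2 := by
      rw [rpow_npow_eq 2 (s+1/2) k (by norm_num), pow_two, pow_two,
        ← Real.rpow_add (by norm_num : (0:ℝ) < 2), ← Real.rpow_add (by norm_num : (0:ℝ) < 2),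
        ← Real.rpow_add (by norm_num : (0:ℝ) < 2)]
      congr 1
      ring
    calc g (e k) = (2:ℝ)^(-2*s*(-(k:ℝ))) * ((2:ℝ)^((k:ℝ)/2))^2
          * (PP α * (rr α^2/2)^k - QQ α * (rr α/2)^k)^2 := by
          rw [hg]
          simp only [he]
          rw [innH_fLow_sq hα1 hα2 k, hcast]
          ring
      _ = (((2:ℝ)^(s+1/2))^k)^2 * (PP α * (rr α^2/2)^k - QQ α * (rr α/2)^k)^2 := by
          rw [hfact]
      _ = (PP α * ((2:ℝ)^(s+1/2) * (rr α^2/2))^k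
            - QQ α * ((2:ℝ)^(s+1/2) * (rr α/2))^k)^2 := by
          rw [mul_pow ((2:ℝ)^(s+1/2)) (rr α^2/2) k, mul_pow ((2:ℝ)^(s+1/2)) (rr α/2) k]
          ring
      _ = (PP α * ((2:ℝ)^(s+1/2-2*α))^k - QQ α * ((2:ℝ)^(s-α))^k)^2 := by
          rw [hX, hY]
  -- t₁ > 1, 0 ≤ t₂ < 1
  have ht1 : 1 < (2:ℝ)^(s+1/2-2*α) := by
    have h : (2:ℝ)^(0:ℝ) < (2:ℝ)^(s+1/2-2*α) :=
      (Real.rpow_lt_rpow_left_iff (by norm_num)).2 (by linarith)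
    rwa [Real.rpow_zero] at h
  have ht2 : (2:ℝ)^(s-α) < 1 := Real.rpow_lt_one_of_one_lt_of_neg (by norm_num) (by linarith)
  have ht2' : (0:ℝ) ≤ (2:ℝ)^(s-α) := le_of_lt (Real.rpow_pos_of_pos (by norm_num) _)
  have hP := PP_pos hα1 hα2
  have hQ := QQ_pos hα1 hα2
  -- eventually g (e k) ≥ 1
  have htend : Filter.Tendsto (fun k : ℕ => PP α * ((2:ℝ)^(s+1/2-2*α))^k)
      Filter.atTop Filter.atTop :=
    (tendsto_pow_atTop_atTop_of_one_lt ht1).const_mul_atTop hP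
  have hev1 : ∀ᶠ k : ℕ in Filter.atTop, 1 ≤ g (e k) := by
    filter_upwards [htend.eventually_ge_atTop (1 + QQ α)] with k hk
    rw [hgk k]
    have hb : ((2:ℝ)^(s-α))^k ≤ 1 := pow_le_one₀ ht2' (le_of_lt ht2)
    have hQk : QQ α * ((2:ℝ)^(s-α))^k ≤ QQ α := by nlinarith
    have h1le : 1 ≤ PP α * ((2:ℝ)^(s+1/2-2*α))^k - QQ α * ((2:ℝ)^(s-α))^k := by linarith
    nlinarith
  -- but summability forces g (e k) → 0
  have htends0 : Filter.Tendsto (g ∘ e) Filter.atTop (nhds 0) := by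
    rw [← Nat.cofinite_eq_atTop]
    exact (hsumm.tendsto_cofinite_zero).comp hinj.tendsto_cofinite
  have hev2 : ∀ᶠ k : ℕ in Filter.atTop, g (e k) < 1 :=
    htends0.eventually (gt_mem_nhds one_pos)
  obtain ⟨k, hk1, hk2⟩ := (hev1.and hev2).exists
  linarith

end NA

theorem not_algebra_low (s α : ℝ) (hs0 : 0 < s) (hs1 : s < 1 / 2) (h1 : s < α)
    (h2 : α < s / 2 + 1 / 4) :
    memHs s (fLow α) ∧ ¬ memHs s (fun x => fLow α x ^ 2) := by
  have hα1 : 0 < α := lt_trans hs0 h1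
  have hα2 : α < 1/2 := by linarith
  constructor
  · exact NA.memHs_fLow s h1 hα1 hα2
  · intro hmem
    exact NA.not_summable_sq hs0 hs1 h1 h2 hmem.2
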